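/- Let 0 < α < β, let g : [α,β] → ℂ be real-valued and continuously differentiable with g(α) = 1 and g(β) = −1, and set M_g = max_{[α,β]} |g| and M_{g′} = max_{[α,β]} |g′|. Let λ ∈ ℝ and let y, z, f : [α,β] → ℂ be continuously differentiable with i λ y′(x) − z′(x) = f′(x) for all x ∈ (α,β). Then |z(β)|² + |z(α)|² ≤ M_{g′} ∫_α^β |z|² dx + 2|λ| M_g (∫_α^β |y′|² dx)^{1/2} (∫_α^β |z|² dx)^{1/2} + 2 M_g (∫_α^β |f′|² dx)^{1/2} (∫_α^β |z|² dx)^{1/2}. -/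

import Mathlib

open MeasureTheory Complex

private lemma cs_interval (a b : ℝ) (hab : a ≤ b) (u v : ℝ → ℝ)
    (hu : ContinuousOn u (Set.Icc a b)) (hv : ContinuousOn v (Set.Icc a b)) :
    ∫ x in a..b, u x * v x ≤
      Real.sqrt (∫ x in a..b, u x ^ 2) * Real.sqrt (∫ x in a..b, v x ^ 2) := by
  have hicc : Set.uIcc a b = Set.Icc a b := Set.uIcc_of_le hab
  have hiu : IntervalIntegrable (fun x => u x ^ 2) volume a b :=
    ((hu.pow 2).mono (le_of_eq hicc)).intervalIntegrable
  have hiv : IntervalIntegrable (fun x => v x ^ 2) volume a b :=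
    ((hv.pow 2).mono (le_of_eq hicc)).intervalIntegrable
  have hiuv : IntervalIntegrable (fun x => u x * v x) volume a b :=
    ((hu.mul hv).mono (le_of_eq hicc)).intervalIntegrable
  set A := ∫ x in a..b, u x ^ 2 with hA
  set C := ∫ x in a..b, v x ^ 2 with hC
  set B := ∫ x in a..b, u x * v x with hB
  have hA0 : 0 ≤ A := intervalIntegral.integral_nonneg hab (fun x _ => sq_nonneg _)
  have hC0 : 0 ≤ C := intervalIntegral.integral_nonneg hab (fun x _ => sq_nonneg _)
  have key : ∀ t : ℝ, 2 * t * B ≤ A + t ^ 2 * C := by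
    intro t
    have h0 : 0 ≤ ∫ x in a..b, (u x - t * v x) ^ 2 :=
      intervalIntegral.integral_nonneg hab (fun x _ => sq_nonneg _)
    have hexp : (∫ x in a..b, (u x - t * v x) ^ 2)
        = A - 2 * t * B + t ^ 2 * C := by
      have : ∀ x, (u x - t * v x) ^ 2
          = u x ^ 2 - (2 * t) * (u x * v x) + t ^ 2 * v x ^ 2 := by
        intro x; ring
      simp_rw [this]
      rw [intervalIntegral.integral_add (hiu.sub ((hiuv.const_mul _)))
            (hiv.const_mul _),
          intervalIntegral.integral_sub hiu (hiuv.const_mul _),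
          intervalIntegral.integral_const_mul, intervalIntegral.integral_const_mul]
    nlinarith [h0, hexp]
  rcases le_or_gt B 0 with hB0 | hB0
  · exact hB0.trans (by positivity)
  · have hCpos : 0 < C := by
      by_contra hc
      push_neg at hc
      have hCz : C = 0 := le_antisymm hc hC0
      have hk := key ((A + 1) / (2 * B))
      rw [hCz] at hk
      have h2B : (2 * B) ≠ 0 := by positivity
      have he : 2 * ((A + 1) / (2 * B)) * B = A + 1 := by field_simp
      rw [he] at hk
      nlinarith
    have hB2 : B ^ 2 ≤ A * C := by
      have hk := key (B / C)
      have h1 : 2 * (B / C) * B = 2 * (B ^ 2 / C) := by ring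
      have h2 : (B / C) ^ 2 * C = B ^ 2 / C := by field_simp
      rw [h1, h2] at hk
      have h3 : B ^ 2 / C ≤ A := by linarith
      have := (div_le_iff₀ hCpos).mp h3
      nlinarith
    calc B = Real.sqrt (B ^ 2) := by rw [Real.sqrt_sq hB0.le]
    _ ≤ Real.sqrt (A * C) := Real.sqrt_le_sqrt hB2
    _ = Real.sqrt A * Real.sqrt C := Real.sqrt_mul hA0 _

private lemma deriv_normsq (z : ℝ → ℂ) (w : ℂ) (x : ℝ) (hz : HasDerivAt z w x) :
    HasDerivAt (fun t => ‖z t‖ ^ 2) (2 * ((starRingEnd ℂ) (z x) * w).re) x := by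
  have h1 : HasDerivAt (fun t => (starRingEnd ℂ) (z t) * z t)
      ((starRingEnd ℂ) w * z x + (starRingEnd ℂ) (z x) * w) x := hz.star.mul hz
  have h2 : HasDerivAt (fun t => ((starRingEnd ℂ) (z t) * z t).re)
      (((starRingEnd ℂ) w * z x + (starRingEnd ℂ) (z x) * w).re) x :=
    Complex.reCLM.hasFDerivAt.comp_hasDerivAt x h1
  have hre : ((starRingEnd ℂ) w * z x + (starRingEnd ℂ) (z x) * w).re
      = 2 * ((starRingEnd ℂ) (z x) * w).re := by
    simp [Complex.add_re, Complex.mul_re]; ring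
  have hfun : (fun t => ((starRingEnd ℂ) (z t) * z t).re) = fun t => ‖z t‖ ^ 2 := by
    funext t
    rw [Complex.mul_re, Complex.sq_norm, Complex.normSq_apply,
      Complex.conj_re, Complex.conj_im]
    ring
  rw [hre, hfun] at h2
  exact h2

/-- Boundary-trace estimate for `z` from the differentiated resolvent equation
`iλy′ − z′ = f′` on `(α,β)`, via the multiplier `2 g z̄`. -/
theorem stmt_5 (α β lam Mg Mg' : ℝ) (hα : 0 < α) (hαβ : α < β)
    (g g' : ℝ → ℝ)
    (hg : ∀ x ∈ Set.Icc α β, HasDerivAt g (g' x) x)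
    (hg'c : ContinuousOn g' (Set.Icc α β))
    (hgα : g α = 1) (hgβ : g β = -1)
    (hMg : IsGreatest ((fun x => |g x|) '' Set.Icc α β) Mg)
    (hMg' : IsGreatest ((fun x => |g' x|) '' Set.Icc α β) Mg')
    (y z f y' z' f' : ℝ → ℂ)
    (hy : ∀ x ∈ Set.Icc α β, HasDerivAt y (y' x) x)
    (hz : ∀ x ∈ Set.Icc α β, HasDerivAt z (z' x) x)
    (hf : ∀ x ∈ Set.Icc α β, HasDerivAt f (f' x) x)
    (hy'c : ContinuousOn y' (Set.Icc α β))
    (hz'c : ContinuousOn z' (Set.Icc α β))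
    (hf'c : ContinuousOn f' (Set.Icc α β))
    (heq : ∀ x ∈ Set.Ioo α β, Complex.I * (lam : ℂ) * y' x - z' x = f' x) :
    ‖z β‖ ^ 2 + ‖z α‖ ^ 2 ≤
      Mg' * (∫ x in α..β, ‖z x‖ ^ 2)
        + 2 * |lam| * Mg * Real.sqrt (∫ x in α..β, ‖y' x‖ ^ 2)
            * Real.sqrt (∫ x in α..β, ‖z x‖ ^ 2)
        + 2 * Mg * Real.sqrt (∫ x in α..β, ‖f' x‖ ^ 2)
            * Real.sqrt (∫ x in α..β, ‖z x‖ ^ 2) := by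
  have hab : α ≤ β := hαβ.le
  have hicc : Set.uIcc α β = Set.Icc α β := Set.uIcc_of_le hab
  have haIcc : α ∈ Set.Icc α β := Set.left_mem_Icc.2 hab
  have hbIcc : β ∈ Set.Icc α β := Set.right_mem_Icc.2 hab
  -- continuity
  have hzc : ContinuousOn z (Set.Icc α β) :=
    fun x hx => (hz x hx).continuousAt.continuousWithinAt
  have hgc : ContinuousOn g (Set.Icc α β) :=
    fun x hx => (hg x hx).continuousAt.continuousWithinAt
  have hqc : ContinuousOn (fun x => ‖z x‖ ^ 2) (Set.Icc α β) := hzc.norm.pow 2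
  have hnzc : ContinuousOn (fun x => ‖z x‖) (Set.Icc α β) := hzc.norm
  have hny'c : ContinuousOn (fun x => ‖y' x‖) (Set.Icc α β) := hy'c.norm
  have hnf'c : ContinuousOn (fun x => ‖f' x‖) (Set.Icc α β) := hf'c.norm
  -- bounds
  have hMgb : ∀ x ∈ Set.Icc α β, |g x| ≤ Mg := fun x hx => hMg.2 ⟨x, hx, rfl⟩
  have hMg'b : ∀ x ∈ Set.Icc α β, |g' x| ≤ Mg' := fun x hx => hMg'.2 ⟨x, hx, rfl⟩
  have hMg0 : 0 ≤ Mg := le_trans (abs_nonneg _) (hMgb α haIcc)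
  have hMg'0 : 0 ≤ Mg' := le_trans (abs_nonneg _) (hMg'b α haIcc)
  -- the derivative of g * ‖z‖²
  set d : ℝ → ℝ :=
    fun x => g' x * ‖z x‖ ^ 2 + g x * (2 * ((starRingEnd ℂ) (z x) * z' x).re) with hd
  have hdc : ContinuousOn d (Set.Icc α β) := by
    apply (hg'c.mul hqc).add
    apply hgc.mul
    exact (continuousOn_const.mul
      (Complex.continuous_re.comp_continuousOn (hzc.star.mul hz'c)))
  have hdint : IntervalIntegrable d volume α β :=
    (hdc.mono (le_of_eq hicc)).intervalIntegrable
  have hφ : ∀ x ∈ Set.uIcc α β, HasDerivAt (fun t => g t * ‖z t‖ ^ 2) (d x) x := by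
    intro x hx
    rw [hicc] at hx
    exact (hg x hx).mul (deriv_normsq z (z' x) x (hz x hx))
  have hFTC : ∫ x in α..β, d x = g β * ‖z β‖ ^ 2 - g α * ‖z α‖ ^ 2 :=
    intervalIntegral.integral_eq_sub_of_hasDerivAt hφ hdint
  rw [hgα, hgβ] at hFTC
  have hsum : ‖z β‖ ^ 2 + ‖z α‖ ^ 2 = ∫ x in α..β, -d x := by
    rw [intervalIntegral.integral_neg, hFTC]; ring
  -- the majorant
  set R : ℝ → ℝ := fun x => Mg' * ‖z x‖ ^ 2
      + 2 * |lam| * Mg * (‖y' x‖ * ‖z x‖) + 2 * Mg * (‖f' x‖ * ‖z x‖) with hR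
  have hRc : ContinuousOn R (Set.Icc α β) :=
    ((continuousOn_const.mul hqc).add
      (continuousOn_const.mul (hny'c.mul hnzc))).add
      (continuousOn_const.mul (hnf'c.mul hnzc))
  have hRint : IntervalIntegrable R volume α β :=
    (hRc.mono (le_of_eq hicc)).intervalIntegrable
  -- pointwise bound on Ioo
  have hpt : ∀ x ∈ Set.Ioo α β, -d x ≤ R x := by
    intro x hx
    have hxI : x ∈ Set.Icc α β := Set.Ioo_subset_Icc_self hx
    have hz'x : z' x = Complex.I * (lam : ℂ) * y' x - f' x := by
      have := heq x hx; linear_combination -this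
    have h1 : -(g' x * ‖z x‖ ^ 2) ≤ Mg' * ‖z x‖ ^ 2 := by
      have := hMg'b x hxI
      have h := neg_abs_le (g' x)
      nlinarith [sq_nonneg ‖z x‖]
    have hzn : ‖z' x‖ ≤ |lam| * ‖y' x‖ + ‖f' x‖ := by
      rw [hz'x]
      refine (norm_sub_le _ _).trans ?_
      gcongr
      rw [norm_mul, norm_mul]
      simp
    have hre : |((starRingEnd ℂ) (z x) * z' x).re| ≤ ‖z x‖ * ‖z' x‖ := by
      refine (Complex.abs_re_le_norm _).trans ?_
      rw [norm_mul]
      simp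
    have h2 : -(g x * (2 * ((starRingEnd ℂ) (z x) * z' x).re))
        ≤ 2 * |lam| * Mg * (‖y' x‖ * ‖z x‖) + 2 * Mg * (‖f' x‖ * ‖z x‖) := by
      have hgx := hMgb x hxI
      have hb : |g x * (2 * ((starRingEnd ℂ) (z x) * z' x).re)|
          ≤ Mg * (2 * (‖z x‖ * ‖z' x‖)) := by
        rw [abs_mul, abs_mul]
        have : |(2:ℝ)| = 2 := by norm_num
        rw [this]
        apply mul_le_mul hgx (by nlinarith [abs_nonneg (((starRingEnd ℂ) (z x) * z' x).re)]) (by positivity) hMg0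
      have := neg_abs_le (g x * (2 * ((starRingEnd ℂ) (z x) * z' x).re))
      have hz0 : (0:ℝ) ≤ ‖z x‖ := norm_nonneg _
      nlinarith [norm_nonneg (y' x), norm_nonneg (f' x), norm_nonneg (z' x),
        mul_le_mul_of_nonneg_left hzn hz0]
    simp only [hd, hR, neg_add]
    linarith
  -- a.e. bound on Icc
  have hae : (fun x => -d x) ≤ᵐ[volume.restrict (Set.Icc α β)] R := by
    have h1 : ∀ᵐ x ∂(volume.restrict (Set.Icc α β)), x ∈ Set.Ioo α β := by
      rw [← Measure.restrict_congr_set Ioo_ae_eq_Icc]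
      exact ae_restrict_mem measurableSet_Ioo
    filter_upwards [h1] with x hx using hpt x hx
  have hmono : (∫ x in α..β, -d x) ≤ ∫ x in α..β, R x :=
    intervalIntegral.integral_mono_ae_restrict hab hdint.neg hRint hae
  -- split the integral of R
  have hi1 : IntervalIntegrable (fun x => Mg' * ‖z x‖ ^ 2) volume α β :=
    ((continuousOn_const.mul hqc).mono (le_of_eq hicc)).intervalIntegrable
  have hi2 : IntervalIntegrable (fun x => 2 * |lam| * Mg * (‖y' x‖ * ‖z x‖)) volume α β :=
    ((continuousOn_const.mul (hny'c.mul hnzc)).mono (le_of_eq hicc)).intervalIntegrable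
  have hi3 : IntervalIntegrable (fun x => 2 * Mg * (‖f' x‖ * ‖z x‖)) volume α β :=
    ((continuousOn_const.mul (hnf'c.mul hnzc)).mono (le_of_eq hicc)).intervalIntegrable
  have hsplit : (∫ x in α..β, R x)
      = Mg' * (∫ x in α..β, ‖z x‖ ^ 2)
        + 2 * |lam| * Mg * (∫ x in α..β, ‖y' x‖ * ‖z x‖)
        + 2 * Mg * (∫ x in α..β, ‖f' x‖ * ‖z x‖) := by
    rw [hR]
    rw [intervalIntegral.integral_add (hi1.add hi2) hi3,
        intervalIntegral.integral_add hi1 hi2,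
        intervalIntegral.integral_const_mul, intervalIntegral.integral_const_mul,
        intervalIntegral.integral_const_mul]
  -- Cauchy–Schwarz
  have hcs1 : (∫ x in α..β, ‖y' x‖ * ‖z x‖)
      ≤ Real.sqrt (∫ x in α..β, ‖y' x‖ ^ 2) * Real.sqrt (∫ x in α..β, ‖z x‖ ^ 2) :=
    cs_interval α β hab _ _ hny'c hnzc
  have hcs2 : (∫ x in α..β, ‖f' x‖ * ‖z x‖)
      ≤ Real.sqrt (∫ x in α..β, ‖f' x‖ ^ 2) * Real.sqrt (∫ x in α..β, ‖z x‖ ^ 2) :=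
    cs_interval α β hab _ _ hnf'c hnzc
  have hc1 : (0:ℝ) ≤ 2 * |lam| * Mg := by positivity
  have hc2 : (0:ℝ) ≤ 2 * Mg := by positivity
  have hfin1 := mul_le_mul_of_nonneg_left hcs1 hc1
  have hfin2 := mul_le_mul_of_nonneg_left hcs2 hc2
  rw [hsum]
  calc (∫ x in α..β, -d x) ≤ ∫ x in α..β, R x := hmono
  _ = Mg' * (∫ x in α..β, ‖z x‖ ^ 2)
        + 2 * |lam| * Mg * (∫ x in α..β, ‖y' x‖ * ‖z x‖)
        + 2 * Mg * (∫ x in α..β, ‖f' x‖ * ‖z x‖) := hsplit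
  _ ≤ Mg' * (∫ x in α..β, ‖z x‖ ^ 2)
        + 2 * |lam| * Mg * Real.sqrt (∫ x in α..β, ‖y' x‖ ^ 2)
            * Real.sqrt (∫ x in α..β, ‖z x‖ ^ 2)
        + 2 * Mg * Real.sqrt (∫ x in α..β, ‖f' x‖ ^ 2)
            * Real.sqrt (∫ x in α..β, ‖z x‖ ^ 2) := by
      have e1 : 2 * |lam| * Mg * Real.sqrt (∫ x in α..β, ‖y' x‖ ^ 2)
          * Real.sqrt (∫ x in α..β, ‖z x‖ ^ 2)
          = 2 * |lam| * Mg * (Real.sqrt (∫ x in α..β, ‖y' x‖ ^ 2)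
            * Real.sqrt (∫ x in α..β, ‖z x‖ ^ 2)) := by ring
      have e2 : 2 * Mg * Real.sqrt (∫ x in α..β, ‖f' x‖ ^ 2)
          * Real.sqrt (∫ x in α..β, ‖z x‖ ^ 2)
          = 2 * Mg * (Real.sqrt (∫ x in α..β, ‖f' x‖ ^ 2)
            * Real.sqrt (∫ x in α..β, ‖z x‖ ^ 2)) := by ring
      rw [e1, e2]
      linarith
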